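/- For every ξ ∈ ℝ³ (regarded as a vector in ℂ³ with real coordinates) and every R > 0, there exist θ, θ′ ∈ M such that θ′ − θ = ξ, ‖θ‖ > R and ‖θ′‖ > R. -/

import Mathlib

set_option maxHeartbeats 1000000

open Complex

/-- The bilinear "dot product" on `ℂ³` without complex conjugation. -/
noncomputable def cdot (θ w : EuclideanSpace ℂ (Fin 3)) : ℂ :=
  θ 0 * w 0 + θ 1 * w 1 + θ 2 * w 2

/-- The algebraic variety `M = {θ ∈ ℂ³ : θ·θ = 1}`. -/
noncomputable def M : Set (EuclideanSpace ℂ (Fin 3)) := {θ | cdot θ θ = 1}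

open Module in
lemma exists_ortho (ξ : EuclideanSpace ℝ (Fin 3)) :
    ∃ e f : EuclideanSpace ℝ (Fin 3),
      (inner ℝ e e : ℝ) = 1 ∧ (inner ℝ f f : ℝ) = 1 ∧ (inner ℝ e f : ℝ) = 0 ∧
      (inner ℝ ξ e : ℝ) = 0 ∧ (inner ℝ ξ f : ℝ) = 0 := by
  have hsum := Submodule.finrank_add_finrank_orthogonal (𝕜 := ℝ) (Submodule.span ℝ {ξ})
  rw [finrank_euclideanSpace_fin] at hsum
  have hle : finrank ℝ (Submodule.span ℝ {ξ}) ≤ 1 := by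
    by_cases h : ξ = 0
    · subst h
      rw [Submodule.span_zero_singleton, finrank_bot]
      omega
    · rw [finrank_span_singleton h]
  have h2 : 2 ≤ finrank ℝ ((Submodule.span ℝ {ξ})ᗮ : Submodule ℝ (EuclideanSpace ℝ (Fin 3))) := by omega
  let b := stdOrthonormalBasis ℝ ((Submodule.span ℝ {ξ})ᗮ : Submodule ℝ (EuclideanSpace ℝ (Fin 3)))
  have hunit : ∀ i, (inner ℝ ((b i : EuclideanSpace ℝ (Fin 3))) (b i) : ℝ) = 1 := by
    intro i
    rw [← Submodule.coe_inner, real_inner_self_eq_norm_sq, b.orthonormal.1 i]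
    norm_num
  have hperp : ∀ i, (inner ℝ ξ ((b i : EuclideanSpace ℝ (Fin 3))) : ℝ) = 0 := by
    intro i
    exact ((Submodule.mem_orthogonal _ _).1 (b i).2) ξ (Submodule.mem_span_singleton_self ξ)
  refine ⟨b ⟨0, by omega⟩, b ⟨1, by omega⟩, hunit _, hunit _, ?_, hperp _, hperp _⟩
  have := b.orthonormal.2 (i := ⟨0, by omega⟩) (j := ⟨1, by omega⟩) (by simp)
  simp only [← Submodule.coe_inner] at this
  exact this

theorem exists_large_theta_pair (ξ : EuclideanSpace ℝ (Fin 3)) (R : ℝ) (hR : R > 0) :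
    ∃ θ ∈ M, ∃ θ' ∈ M,
      θ' - θ = (WithLp.toLp 2 (fun i => ((ξ i : ℂ))) : EuclideanSpace ℂ (Fin 3)) ∧
      ‖θ‖ > R ∧ ‖θ'‖ > R := by
  obtain ⟨e, f, hE, hF, hEF, hXE, hXF⟩ := exists_ortho ξ
  have hXX : (inner ℝ ξ ξ : ℝ) = ‖ξ‖ ^ 2 := real_inner_self_eq_norm_sq ξ
  simp only [PiLp.inner_apply, RCLike.inner_apply, conj_trivial, Fin.sum_univ_three] at hE hF hEF hXE hXF hXX
  set β : ℝ := R + ‖ξ‖ + 1 with hβdef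
  have hβpos : 0 < β := by have := norm_nonneg ξ; rw [hβdef]; linarith
  have hβR : R < β := by have := norm_nonneg ξ; rw [hβdef]; linarith
  have hnn : 0 ≤ β ^ 2 + 1 - ‖ξ‖ ^ 2 / 4 := by
    have h1 : ‖ξ‖ ≤ β := by rw [hβdef]; linarith
    nlinarith [norm_nonneg ξ]
  set α : ℝ := Real.sqrt (β ^ 2 + 1 - ‖ξ‖ ^ 2 / 4) with hαdef
  have hα2 : α ^ 2 = β ^ 2 + 1 - ‖ξ‖ ^ 2 / 4 := Real.sq_sqrt hnn
  -- complex casts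
  have hEc : (e 0 : ℂ) * e 0 + (e 1 : ℂ) * e 1 + (e 2 : ℂ) * e 2 = 1 := by exact_mod_cast congrArg Complex.ofReal hE
  have hFc : (f 0 : ℂ) * f 0 + (f 1 : ℂ) * f 1 + (f 2 : ℂ) * f 2 = 1 := by exact_mod_cast congrArg Complex.ofReal hF
  have hEFc : (e 0 : ℂ) * f 0 + (e 1 : ℂ) * f 1 + (e 2 : ℂ) * f 2 = 0 := by have := congrArg Complex.ofReal hEF; push_cast at this; linear_combination this
  have hXEc : (ξ 0 : ℂ) * e 0 + (ξ 1 : ℂ) * e 1 + (ξ 2 : ℂ) * e 2 = 0 := by have := congrArg Complex.ofReal hXE; push_cast at this; linear_combination this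
  have hXFc : (ξ 0 : ℂ) * f 0 + (ξ 1 : ℂ) * f 1 + (ξ 2 : ℂ) * f 2 = 0 := by have := congrArg Complex.ofReal hXF; push_cast at this; linear_combination this
  have hXXc : (ξ 0 : ℂ) * ξ 0 + (ξ 1 : ℂ) * ξ 1 + (ξ 2 : ℂ) * ξ 2 = (‖ξ‖ : ℂ) ^ 2 := by exact_mod_cast congrArg Complex.ofReal hXX
  have hαc : (α : ℂ) ^ 2 = (β : ℂ) ^ 2 + 1 - (‖ξ‖ : ℂ) ^ 2 / 4 := by exact_mod_cast congrArg Complex.ofReal hα2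
  set θ : EuclideanSpace ℂ (Fin 3) := WithLp.toLp 2 (fun i => ((-(ξ i) / 2 + α * e i : ℝ) : ℂ) + ((β * f i : ℝ) : ℂ) * I) with hθdef
  set θ' : EuclideanSpace ℂ (Fin 3) := WithLp.toLp 2 (fun i => (((ξ i) / 2 + α * e i : ℝ) : ℂ) + ((β * f i : ℝ) : ℂ) * I) with hθ'def
  have happ : ∀ i, θ i = ((-(ξ i) / 2 + α * e i : ℝ) : ℂ) + ((β * f i : ℝ) : ℂ) * I := fun i => rfl
  have happ' : ∀ i, θ' i = (((ξ i) / 2 + α * e i : ℝ) : ℂ) + ((β * f i : ℝ) : ℂ) * I := fun i => rfl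
  have hnorm : ∀ (u : EuclideanSpace ℂ (Fin 3)) (a c : Fin 3 → ℝ),
      (∀ i, u i = (a i : ℂ) + (c i : ℂ) * I) → β ^ 2 ≤ c 0 ^ 2 + c 1 ^ 2 + c 2 ^ 2 + (a 0 ^ 2 + a 1 ^ 2 + a 2 ^ 2) → R < ‖u‖ := by
    intro u a c hu hc
    have hsq : ∀ i, ‖u i‖ ^ 2 = a i ^ 2 + c i ^ 2 := by
      intro i
      rw [hu i, Complex.sq_norm, Complex.normSq_add_mul_I]
    rw [EuclideanSpace.norm_eq]
    simp only [Fin.sum_univ_three, hsq]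
    refine lt_of_lt_of_le hβR ?_
    rw [show (β : ℝ) = Real.sqrt (β ^ 2) from (Real.sqrt_sq hβpos.le).symm]
    apply Real.sqrt_le_sqrt
    nlinarith
  refine ⟨θ, ?_, θ', ?_, ?_, ?_, ?_⟩
  · show cdot θ θ = 1
    simp only [cdot, happ]
    push_cast
    linear_combination (1/4 : ℂ) * hXXc - (α : ℂ) * hXEc + (α : ℂ) ^ 2 * hEc - (β : ℂ) ^ 2 * hFc - I * β * hXFc + 2 * I * α * β * hEFc + hαc + ((β : ℂ) ^ 2 * ((f 0 : ℂ) * f 0 + (f 1 : ℂ) * f 1 + (f 2 : ℂ) * f 2)) * Complex.I_sq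
  · show cdot θ' θ' = 1
    simp only [cdot, happ']
    push_cast
    linear_combination (1/4 : ℂ) * hXXc + (α : ℂ) * hXEc + (α : ℂ) ^ 2 * hEc - (β : ℂ) ^ 2 * hFc + I * β * hXFc + 2 * I * α * β * hEFc + hαc + ((β : ℂ) ^ 2 * ((f 0 : ℂ) * f 0 + (f 1 : ℂ) * f 1 + (f 2 : ℂ) * f 2)) * Complex.I_sq
  · ext i
    have : (θ' - θ) i = θ' i - θ i := rfl
    rw [this, happ i, happ' i]
    push_cast
    ring
  · refine hnorm θ (fun i => -(ξ i) / 2 + α * e i) (fun i => β * f i) happ ?_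
    nlinarith [hF, sq_nonneg (-(ξ 0)/2 + α * e 0), sq_nonneg (-(ξ 1)/2 + α * e 1), sq_nonneg (-(ξ 2)/2 + α * e 2)]
  · refine hnorm θ' (fun i => (ξ i) / 2 + α * e i) (fun i => β * f i) happ' ?_
    nlinarith [hF, sq_nonneg ((ξ 0)/2 + α * e 0), sq_nonneg ((ξ 1)/2 + α * e 1), sq_nonneg ((ξ 2)/2 + α * e 2)]
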